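/- Let 0 < ε₁ < ε₂ < 1/2, σ ∈ [ε₁, ε₂], p₁, p₂ > 0 with p₁ + p₂ ≤ 1, and set F(x) = f_{σ,ε₁,p₁}(−x) + f_{σ,ε₂,p₂}(x) where f_{σ,ε,p}(x) = (p+x)·f_c((pε+xσ)/(p+x)) and f_c(u) = 1 + u·log₂ u + (1−u)·log₂(1−u). If σ ≤ φ(ε₁,ε₂) then F is decreasing on (−p₂(1−2ε₂)/(1−2σ), 0]; if σ ≥ φ(ε₁,ε₂) then F is increasing on [0, p₁ε₁/σ). Here φ(ε₁,ε₂) = ln((1−ε₁)/(1−ε₂))/ln(((1−ε₁)ε₂)/((1−ε₂)ε₁)). -/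

import Mathlib

noncomputable def term (p ε σ x : ℝ) : ℝ :=
  (p + x) * (1 + ((p * ε + x * σ) / (p + x)) * Real.logb 2 ((p * ε + x * σ) / (p + x))
    + (1 - (p * ε + x * σ) / (p + x)) * Real.logb 2 (1 - (p * ε + x * σ) / (p + x)))

noncomputable def nice (p ε σ x : ℝ) : ℝ :=
  (p + x) + ((p * ε + x * σ) * Real.log (p * ε + x * σ)
    + ((p + x) - (p * ε + x * σ)) * Real.log ((p + x) - (p * ε + x * σ))
    - (p + x) * Real.log (p + x)) / Real.log 2

noncomputable def gf (σ u : ℝ) : ℝ :=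
  1 + σ * Real.log u / Real.log 2 + (1 - σ) * Real.log (1 - u) / Real.log 2

lemma log2_pos : (0:ℝ) < Real.log 2 := Real.log_pos (by norm_num)

lemma term_eq_nice (p ε σ x : ℝ) (hD : 0 < p + x) (hN : 0 < p * ε + x * σ)
    (hM : p * ε + x * σ < p + x) : term p ε σ x = nice p ε σ x := by
  unfold term nice
  have e1 : 1 - (p * ε + x * σ) / (p + x) = ((p + x) - (p * ε + x * σ)) / (p + x) := by
    field_simp
  rw [e1, Real.logb, Real.logb, Real.log_div hN.ne' hD.ne',
    Real.log_div (by linarith) hD.ne']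
  field_simp
  ring

lemma affine_mul_log (a b x : ℝ) (h : a + x * b ≠ 0) :
    HasDerivAt (fun y => (a + y * b) * Real.log (a + y * b)) (b * Real.log (a + x * b) + b) x := by
  have h1 : HasDerivAt (fun y : ℝ => a + y * b) b x := by
    simpa using ((hasDerivAt_id x).mul_const b).const_add a
  have h2 := (Real.hasDerivAt_log h).comp x h1
  have h3 := h1.mul h2
  refine h3.congr_deriv ?_
  simp only [Function.comp_apply, mul_inv_cancel_left₀ h]

lemma nice_hasDerivAt (p ε σ x : ℝ) (hD : 0 < p + x) (hN : 0 < p * ε + x * σ)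
    (hM : p * ε + x * σ < p + x) :
    HasDerivAt (nice p ε σ) (gf σ ((p * ε + x * σ) / (p + x))) x := by
  have hM' : (0:ℝ) < (p + x) - (p * ε + x * σ) := by linarith
  have dN := affine_mul_log (p * ε) σ x hN.ne'
  have dM : HasDerivAt (fun y => ((p + y) - (p * ε + y * σ)) * Real.log ((p + y) - (p * ε + y * σ)))
      ((1 - σ) * Real.log ((p + x) - (p * ε + x * σ)) + (1 - σ)) x := by
    have em : (fun y : ℝ => ((p + y) - (p * ε + y * σ)) * Real.log ((p + y) - (p * ε + y * σ)))
        = fun y => ((p - p * ε) + y * (1 - σ)) * Real.log ((p - p * ε) + y * (1 - σ)) := by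
      funext y; ring_nf
    rw [em]
    have := affine_mul_log (p - p * ε) (1 - σ) x (by nlinarith)
    convert this using 2 <;> ring_nf
  have dD : HasDerivAt (fun y => (p + y) * Real.log (p + y))
      (1 * Real.log (p + x) + 1) x := by
    have em : (fun y : ℝ => (p + y) * Real.log (p + y))
        = fun y => (p + y * 1) * Real.log (p + y * 1) := by funext y; ring_nf
    rw [em]
    have := affine_mul_log p 1 x (by simpa using hD.ne')
    convert this using 2 <;> ring_nf
  have dP : HasDerivAt (fun y : ℝ => p + y) 1 x := by
    simpa using (hasDerivAt_id x).const_add p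
  have := dP.add (((dN.add dM).sub dD).div_const (Real.log 2))
  refine this.congr_deriv ?_
  unfold gf
  rw [Real.log_div hN.ne' hD.ne']
  have e1 : 1 - (p * ε + x * σ) / (p + x) = ((p + x) - (p * ε + x * σ)) / (p + x) := by
    field_simp
  rw [e1, Real.log_div hM'.ne' hD.ne']
  ring

lemma term_hasDerivAt (p ε σ x : ℝ) (hD : 0 < p + x) (hN : 0 < p * ε + x * σ)
    (hM : p * ε + x * σ < p + x) :
    HasDerivAt (term p ε σ) (gf σ ((p * ε + x * σ) / (p + x))) x := by
  have hS : IsOpen {y : ℝ | 0 < p + y ∧ 0 < p * ε + y * σ ∧ p * ε + y * σ < p + y} := by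
    have c1 : Continuous fun y : ℝ => p + y := by continuity
    have c2 : Continuous fun y : ℝ => p * ε + y * σ := by continuity
    exact ((isOpen_lt continuous_const c1).inter
      ((isOpen_lt continuous_const c2).inter (isOpen_lt c2 c1)))
  refine (nice_hasDerivAt p ε σ x hD hN hM).congr_of_eventuallyEq ?_
  filter_upwards [hS.mem_nhds ⟨hD, hN, hM⟩] with y hy
  exact term_eq_nice p ε σ y hy.1 hy.2.1 hy.2.2

lemma gf_hasDerivAt (σ u : ℝ) (h0 : 0 < u) (h1 : u < 1) :
    HasDerivAt (gf σ) ((σ - u) / (u * (1 - u) * Real.log 2)) u := by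
  have d1 : HasDerivAt (fun v : ℝ => Real.log v) u⁻¹ u := Real.hasDerivAt_log h0.ne'
  have dsub : HasDerivAt (fun v : ℝ => 1 - v) (-1) u := by
    simpa using (hasDerivAt_id u).const_sub 1
  have d2 : HasDerivAt (fun v : ℝ => Real.log (1 - v)) ((1-u)⁻¹ * (-1)) u :=
    (Real.hasDerivAt_log (by linarith)).comp u dsub
  have := (((d1.const_mul σ).div_const (Real.log 2)).const_add 1).add
    ((d2.const_mul (1 - σ)).div_const (Real.log 2))
  refine this.congr_deriv ?_
  have hu : u ≠ 0 := h0.ne'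
  have hu1 : (1:ℝ) - u ≠ 0 := by linarith
  field_simp
  ring

lemma gf_mono (σ a b : ℝ) (ha : 0 < a) (hab : a ≤ b) (hb : b ≤ σ) (hσ : σ < 1) :
    gf σ a ≤ gf σ b := by
  rcases eq_or_lt_of_le hab with rfl | hab
  · exact le_refl _
  have key : MonotoneOn (gf σ) (Set.Icc a b) := by
    apply monotoneOn_of_deriv_nonneg (convex_Icc a b)
    · intro u hu
      exact ((gf_hasDerivAt σ u (lt_of_lt_of_le ha hu.1)
        (by linarith [hu.2])).continuousAt).continuousWithinAt
    · intro u hu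
      rw [interior_Icc] at hu
      exact ((gf_hasDerivAt σ u (lt_trans ha hu.1)
        (by linarith [hu.2])).differentiableAt).differentiableWithinAt
    · intro u hu
      rw [interior_Icc] at hu
      rw [(gf_hasDerivAt σ u (lt_trans ha hu.1) (by linarith [hu.2])).deriv]
      apply div_nonneg (by linarith [hu.2])
      have hu1 : u < 1 := by linarith [hu.2]
      have h0 : 0 < u := lt_trans ha hu.1
      exact le_of_lt (mul_pos (mul_pos h0 (by linarith)) log2_pos)
  exact key ⟨le_refl a, hab.le⟩ ⟨hab.le, le_refl b⟩ hab.le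

lemma gf_anti (σ a b : ℝ) (hσ0 : 0 < σ) (ha : σ ≤ a) (hab : a ≤ b) (hb : b < 1) :
    gf σ b ≤ gf σ a := by
  rcases eq_or_lt_of_le hab with rfl | hab
  · exact le_refl _
  have key : AntitoneOn (gf σ) (Set.Icc a b) := by
    apply antitoneOn_of_deriv_nonpos (convex_Icc a b)
    · intro u hu
      exact ((gf_hasDerivAt σ u (by linarith [hu.1])
        (by linarith [hu.2])).continuousAt).continuousWithinAt
    · intro u hu
      rw [interior_Icc] at hu
      exact ((gf_hasDerivAt σ u (by linarith [hu.1])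
        (by linarith [hu.2])).differentiableAt).differentiableWithinAt
    · intro u hu
      rw [interior_Icc] at hu
      rw [(gf_hasDerivAt σ u (by linarith [hu.1]) (by linarith [hu.2])).deriv]
      apply div_nonpos_of_nonpos_of_nonneg (by linarith [hu.1])
      have h0 : 0 < u := by linarith [hu.1]
      have h1 : u < 1 := by linarith [hu.2]
      exact le_of_lt (mul_pos (mul_pos h0 (by linarith)) log2_pos)
  exact key ⟨le_refl a, hab.le⟩ ⟨hab.le, le_refl b⟩ hab.le

lemma F_hasDerivAt (p₁ ε₁ p₂ ε₂ σ x : ℝ)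
    (hD₁ : 0 < p₁ + -x) (hN₁ : 0 < p₁ * ε₁ + (-x) * σ) (hM₁ : p₁ * ε₁ + (-x) * σ < p₁ + -x)
    (hD₂ : 0 < p₂ + x) (hN₂ : 0 < p₂ * ε₂ + x * σ) (hM₂ : p₂ * ε₂ + x * σ < p₂ + x) :
    HasDerivAt (fun y => term p₁ ε₁ σ (-y) + term p₂ ε₂ σ y)
      (gf σ ((p₂ * ε₂ + x * σ) / (p₂ + x)) - gf σ ((p₁ * ε₁ + (-x) * σ) / (p₁ + -x))) x := by
  have d1 := (term_hasDerivAt p₁ ε₁ σ (-x) hD₁ hN₁ hM₁).comp x (hasDerivAt_neg x)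
  have d2 := term_hasDerivAt p₂ ε₂ σ x hD₂ hN₂ hM₂
  have := d1.add d2
  refine this.congr_deriv ?_
  ring
lemma pivot (σ ε₁ ε₂ : ℝ) (h1 : 0 < ε₁) (h12 : ε₁ < ε₂) (h2 : ε₂ < 1) :
    gf σ ε₂ - gf σ ε₁ =
      (σ * Real.log (((1 - ε₁) * ε₂) / ((1 - ε₂) * ε₁)) -
        Real.log ((1 - ε₁) / (1 - ε₂))) / Real.log 2 := by
  have a1 : (0:ℝ) < 1 - ε₁ := by linarith
  have a2 : (0:ℝ) < 1 - ε₂ := by linarith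
  have e2 : (0:ℝ) < ε₂ := by linarith
  rw [Real.log_div (mul_pos a1 e2).ne' (mul_pos a2 h1).ne', Real.log_mul a1.ne' e2.ne',
    Real.log_mul a2.ne' h1.ne', Real.log_div a1.ne' a2.ne']
  unfold gf
  ring

set_option maxHeartbeats 2000000 in
theorem F_monotonicity (ε₁ ε₂ σ p₁ p₂ : ℝ)
    (h1 : 0 < ε₁) (h12 : ε₁ < ε₂) (h2 : ε₂ < 1/2)
    (hσ1 : ε₁ ≤ σ) (hσ2 : σ ≤ ε₂)
    (hp1 : 0 < p₁) (hp2 : 0 < p₂) (hp : p₁ + p₂ ≤ 1) :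
    (σ ≤ Real.log ((1 - ε₁) / (1 - ε₂)) / Real.log (((1 - ε₁) * ε₂) / ((1 - ε₂) * ε₁)) →
      AntitoneOn (fun x : ℝ =>
        (p₁ + -x) * (1 + ((p₁ * ε₁ + (-x) * σ) / (p₁ + -x)) *
              Real.logb 2 ((p₁ * ε₁ + (-x) * σ) / (p₁ + -x))
            + (1 - (p₁ * ε₁ + (-x) * σ) / (p₁ + -x)) *
              Real.logb 2 (1 - (p₁ * ε₁ + (-x) * σ) / (p₁ + -x)))
        + (p₂ + x) * (1 + ((p₂ * ε₂ + x * σ) / (p₂ + x)) *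
              Real.logb 2 ((p₂ * ε₂ + x * σ) / (p₂ + x))
            + (1 - (p₂ * ε₂ + x * σ) / (p₂ + x)) *
              Real.logb 2 (1 - (p₂ * ε₂ + x * σ) / (p₂ + x))))
        (Set.Ioc (-(p₂ * (1 - 2 * ε₂)) / (1 - 2 * σ)) 0)) ∧
    (Real.log ((1 - ε₁) / (1 - ε₂)) / Real.log (((1 - ε₁) * ε₂) / ((1 - ε₂) * ε₁)) ≤ σ →
      MonotoneOn (fun x : ℝ =>
        (p₁ + -x) * (1 + ((p₁ * ε₁ + (-x) * σ) / (p₁ + -x)) *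
              Real.logb 2 ((p₁ * ε₁ + (-x) * σ) / (p₁ + -x))
            + (1 - (p₁ * ε₁ + (-x) * σ) / (p₁ + -x)) *
              Real.logb 2 (1 - (p₁ * ε₁ + (-x) * σ) / (p₁ + -x)))
        + (p₂ + x) * (1 + ((p₂ * ε₂ + x * σ) / (p₂ + x)) *
              Real.logb 2 ((p₂ * ε₂ + x * σ) / (p₂ + x))
            + (1 - (p₂ * ε₂ + x * σ) / (p₂ + x)) *
              Real.logb 2 (1 - (p₂ * ε₂ + x * σ) / (p₂ + x))))
        (Set.Ico 0 (p₁ * ε₁ / σ))) := by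
  have hσpos : (0:ℝ) < σ := lt_of_lt_of_le h1 hσ1
  have hσhalf : σ < 1/2 := lt_of_le_of_lt hσ2 h2
  have a1 : (0:ℝ) < 1 - ε₁ := by linarith
  have a2 : (0:ℝ) < 1 - ε₂ := by linarith
  have e2 : (0:ℝ) < ε₂ := by linarith
  have hL2pos : 0 < Real.log (((1 - ε₁) * ε₂) / ((1 - ε₂) * ε₁)) := by
    apply Real.log_pos
    rw [lt_div_iff₀ (mul_pos a2 h1)]
    nlinarith
  have hpiv := pivot σ ε₁ ε₂ h1 h12 (by linarith)
  constructor
  · -- antitone branch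
    intro hφ
    have hσL : σ * Real.log (((1 - ε₁) * ε₂) / ((1 - ε₂) * ε₁)) ≤
        Real.log ((1 - ε₁) / (1 - ε₂)) := (le_div_iff₀ hL2pos).mp hφ
    have hpiv2 : gf σ ε₂ ≤ gf σ ε₁ := by
      have hq : (σ * Real.log (((1 - ε₁) * ε₂) / ((1 - ε₂) * ε₁)) -
          Real.log ((1 - ε₁) / (1 - ε₂))) / Real.log 2 ≤ 0 :=
        div_nonpos_of_nonpos_of_nonneg (by linarith) log2_pos.le
      linarith [hpiv]
    show AntitoneOn (fun x => term p₁ ε₁ σ (-x) + term p₂ ε₂ σ x)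
      (Set.Ioc (-(p₂ * (1 - 2 * ε₂)) / (1 - 2 * σ)) 0)
    have h2σ : (0:ℝ) < 1 - 2 * σ := by linarith
    have key : ∀ x ∈ Set.Ioc (-(p₂ * (1 - 2 * ε₂)) / (1 - 2 * σ)) (0:ℝ),
        0 < p₁ + -x ∧ 0 < p₁ * ε₁ + (-x) * σ ∧ p₁ * ε₁ + (-x) * σ < p₁ + -x ∧
        0 < p₂ + x ∧ 0 < p₂ * ε₂ + x * σ ∧ p₂ * ε₂ + x * σ < p₂ + x := by
      intro x hx
      have hx0 : x ≤ 0 := hx.2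
      have hax : -(p₂ * (1 - 2 * ε₂)) < x * (1 - 2 * σ) := (div_lt_iff₀ h2σ).mp hx.1
      have ha : 0 < p₁ + -x := by linarith
      have hb : 0 < p₁ * ε₁ + (-x) * σ := by
        nlinarith [mul_nonneg (neg_nonneg.mpr hx0) hσpos.le, mul_pos hp1 h1]
      have hc : p₁ * ε₁ + (-x) * σ < p₁ + -x := by
        nlinarith [mul_nonneg (neg_nonneg.mpr hx0) (show (0:ℝ) ≤ 1 - σ by linarith),
          mul_pos hp1 a1]
      have hd : 0 < p₂ + x := by
        nlinarith [mul_le_mul_of_nonneg_left (show 1 - 2*ε₂ ≤ 1 - 2*σ by linarith) hp2.le,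
          h2σ]
      have he : 0 < p₂ * ε₂ + x * σ := by
        nlinarith [mul_lt_mul_of_pos_right hax hσpos,
          mul_nonneg hp2.le (sub_nonneg.mpr hσ2), h2σ]
      have hf : p₂ * ε₂ + x * σ < p₂ + x := by nlinarith [hax, he]
      exact ⟨ha, hb, hc, hd, he, hf⟩
    apply antitoneOn_of_deriv_nonpos (convex_Ioc _ _)
    · intro x hx
      obtain ⟨ha, hb, hc, hd, he, hf⟩ := key x hx
      exact (F_hasDerivAt p₁ ε₁ p₂ ε₂ σ x ha hb hc hd he hf).continuousAt.continuousWithinAt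
    · intro x hx
      rw [interior_Ioc] at hx
      obtain ⟨ha, hb, hc, hd, he, hf⟩ := key x ⟨hx.1, hx.2.le⟩
      exact (F_hasDerivAt p₁ ε₁ p₂ ε₂ σ x ha hb hc hd he hf).differentiableAt.differentiableWithinAt
    · intro x hx
      rw [interior_Ioc] at hx
      obtain ⟨ha, hb, hc, hd, he, hf⟩ := key x ⟨hx.1, hx.2.le⟩
      rw [(F_hasDerivAt p₁ ε₁ p₂ ε₂ σ x ha hb hc hd he hf).deriv]
      have hx0 : x ≤ 0 := hx.2.le
      have hu1σ : (p₁ * ε₁ + (-x) * σ) / (p₁ + -x) ≤ σ := by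
        rw [div_le_iff₀ ha]; nlinarith [mul_nonneg hp1.le (sub_nonneg.mpr hσ1)]
      have hu1ε : ε₁ ≤ (p₁ * ε₁ + (-x) * σ) / (p₁ + -x) := by
        rw [le_div_iff₀ ha]; nlinarith [mul_nonneg (neg_nonneg.mpr hx0) (sub_nonneg.mpr hσ1)]
      have hu2ε : ε₂ ≤ (p₂ * ε₂ + x * σ) / (p₂ + x) := by
        rw [le_div_iff₀ hd]; nlinarith [mul_nonneg (neg_nonneg.mpr hx0) (sub_nonneg.mpr hσ2)]
      have hu2one : (p₂ * ε₂ + x * σ) / (p₂ + x) < 1 := (div_lt_one hd).mpr hf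
      have i1 := gf_anti σ ε₂ _ hσpos hσ2 hu2ε hu2one
      have i2 := gf_mono σ ε₁ _ h1 hu1ε hu1σ (by linarith)
      linarith
  · -- monotone branch
    intro hφ
    have hσL : Real.log ((1 - ε₁) / (1 - ε₂)) ≤
        σ * Real.log (((1 - ε₁) * ε₂) / ((1 - ε₂) * ε₁)) := (div_le_iff₀ hL2pos).mp hφ
    have hpiv2 : gf σ ε₁ ≤ gf σ ε₂ := by
      have hq : 0 ≤ (σ * Real.log (((1 - ε₁) * ε₂) / ((1 - ε₂) * ε₁)) -
          Real.log ((1 - ε₁) / (1 - ε₂))) / Real.log 2 :=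
        div_nonneg (by linarith) log2_pos.le
      linarith [hpiv]
    show MonotoneOn (fun x => term p₁ ε₁ σ (-x) + term p₂ ε₂ σ x)
      (Set.Ico 0 (p₁ * ε₁ / σ))
    have key : ∀ x ∈ Set.Ico (0:ℝ) (p₁ * ε₁ / σ),
        0 < p₁ + -x ∧ 0 < p₁ * ε₁ + (-x) * σ ∧ p₁ * ε₁ + (-x) * σ < p₁ + -x ∧
        0 < p₂ + x ∧ 0 < p₂ * ε₂ + x * σ ∧ p₂ * ε₂ + x * σ < p₂ + x := by
      intro x hx
      have hx0 : 0 ≤ x := hx.1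
      have hxσ : x * σ < p₁ * ε₁ := (lt_div_iff₀ hσpos).mp hx.2
      have ha : 0 < p₁ + -x := by
        nlinarith [hxσ, mul_le_mul_of_nonneg_left hσ1 hp1.le, hσpos]
      have hb : 0 < p₁ * ε₁ + (-x) * σ := by nlinarith [hxσ]
      have hc : p₁ * ε₁ + (-x) * σ < p₁ + -x := by
        nlinarith [mul_lt_mul_of_pos_right hxσ (show (0:ℝ) < 1 - σ by linarith),
          mul_le_mul_of_nonneg_left hσ1 hp1.le, hσpos]
      have hd : 0 < p₂ + x := by linarith
      have he : 0 < p₂ * ε₂ + x * σ := by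
        nlinarith [mul_nonneg hx0 hσpos.le, mul_pos hp2 e2]
      have hf : p₂ * ε₂ + x * σ < p₂ + x := by
        nlinarith [mul_nonneg hx0 (show (0:ℝ) ≤ 1 - σ by linarith), mul_pos hp2 a2]
      exact ⟨ha, hb, hc, hd, he, hf⟩
    apply monotoneOn_of_deriv_nonneg (convex_Ico _ _)
    · intro x hx
      obtain ⟨ha, hb, hc, hd, he, hf⟩ := key x hx
      exact (F_hasDerivAt p₁ ε₁ p₂ ε₂ σ x ha hb hc hd he hf).continuousAt.continuousWithinAt
    · intro x hx
      rw [interior_Ico] at hx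
      obtain ⟨ha, hb, hc, hd, he, hf⟩ := key x ⟨hx.1.le, hx.2⟩
      exact (F_hasDerivAt p₁ ε₁ p₂ ε₂ σ x ha hb hc hd he hf).differentiableAt.differentiableWithinAt
    · intro x hx
      rw [interior_Ico] at hx
      obtain ⟨ha, hb, hc, hd, he, hf⟩ := key x ⟨hx.1.le, hx.2⟩
      rw [(F_hasDerivAt p₁ ε₁ p₂ ε₂ σ x ha hb hc hd he hf).deriv]
      have hx0 : 0 ≤ x := hx.1.le
      have hu1pos : 0 < (p₁ * ε₁ + (-x) * σ) / (p₁ + -x) := div_pos hb ha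
      have hu1ε : (p₁ * ε₁ + (-x) * σ) / (p₁ + -x) ≤ ε₁ := by
        rw [div_le_iff₀ ha]; nlinarith [mul_nonneg hx0 (sub_nonneg.mpr hσ1)]
      have hu2σ : σ ≤ (p₂ * ε₂ + x * σ) / (p₂ + x) := by
        rw [le_div_iff₀ hd]; nlinarith [mul_nonneg hp2.le (sub_nonneg.mpr hσ2)]
      have hu2ε : (p₂ * ε₂ + x * σ) / (p₂ + x) ≤ ε₂ := by
        rw [div_le_iff₀ hd]; nlinarith [mul_nonneg hx0 (sub_nonneg.mpr hσ2)]
      have i1 := gf_mono σ _ ε₁ hu1pos hu1ε hσ1 (by linarith)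
      have i2 := gf_anti σ _ ε₂ hσpos hu2σ hu2ε (by linarith)
      linarith
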